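/- There exists a constant C > 0 such that for every finitely supported function f : ℤ² → ℂ one has Σ_{n∈ℤ²} Λ(n)^{−4} |(A(A f))(n)|² ≤ C · Σ_{n∈ℤ²} |f(n)|²; i.e., the operator Λ^{−2}(Q) A² extends to a bounded operator on ℓ²(ℤ²,ℂ). -/

import Mathlib

open scoped ENNReal
open Filter

noncomputable section

/-- The Hilbert space `ℓ²(ℤ², ℂ)`. -/
abbrev H2 : Type := lp (fun _ : ℤ × ℤ => ℂ) 2

/-- The triangular-lattice Laplacian, acting pointwise on functions `ℤ² → ℂ`. -/
def lapT (f : ℤ × ℤ → ℂ) : ℤ × ℤ → ℂ := fun n =>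
  (1/6 : ℂ) * (f (n.1 + 1, n.2) + f (n.1 - 1, n.2) + f (n.1, n.2 + 1)
    + f (n.1, n.2 - 1) + f (n.1 + 1, n.2 - 1) + f (n.1 - 1, n.2 + 1))

/-- The symbol `F(x₁,x₂) = (1/3)(cos x₁ + cos x₂ + cos (x₁ - x₂))`. -/
def symbF (x : ℝ × ℝ) : ℝ := (1/3) * (Real.cos x.1 + Real.cos x.2 + Real.cos (x.1 - x.2))

/-- `∂₁ F`. -/
def d1F (x : ℝ × ℝ) : ℝ := -(1/3) * (Real.sin x.1 + Real.sin (x.1 - x.2))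

/-- `∂₂ F`. -/
def d2F (x : ℝ × ℝ) : ℝ := -(1/3) * (Real.sin x.2 - Real.sin (x.1 - x.2))

/-- Japanese bracket `⟨t⟩ = √(1/2 + t²)`. -/
def jap (t : ℝ) : ℝ := Real.sqrt (1/2 + t^2)

/-- The weight `Λ(n₁,n₂) = ⟨n₁⟩ + ⟨n₂⟩`. -/
def Lam (n : ℤ × ℤ) : ℝ := jap (n.1 : ℝ) + jap (n.2 : ℝ)

/-- The conjugate operator `A`, acting pointwise on functions `ℤ² → ℂ`. -/
def opA (f : ℤ × ℤ → ℂ) : ℤ × ℤ → ℂ := fun n =>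
  (Complex.I / 6) *
    (((n.1 : ℂ) + 1/2) * f (n.1 + 1, n.2) - ((n.1 : ℂ) - 1/2) * f (n.1 - 1, n.2)
      + ((n.2 : ℂ) + 1/2) * f (n.1, n.2 + 1) - ((n.2 : ℂ) - 1/2) * f (n.1, n.2 - 1)
      + ((n.2 : ℂ) - (n.1 : ℂ) + 1) * f (n.1 - 1, n.2 + 1)
      + ((n.1 : ℂ) - (n.2 : ℂ) + 1) * f (n.1 + 1, n.2 - 1))

/-- The perturbed Laplacian `Δ̃` with weight `m`, acting pointwise on functions `ℤ² → ℂ`: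
`(Δ̃ f)(n) = (1/6) Σ_{l ∼ n} f(l) / (√(m n) √(m l))`. -/
def lapPert (m : ℤ × ℤ → ℝ) (f : ℤ × ℤ → ℂ) : ℤ × ℤ → ℂ := fun n =>
  (1/6 : ℂ) *
    (f (n.1 + 1, n.2) / ((Real.sqrt (m n) * Real.sqrt (m (n.1 + 1, n.2)) : ℝ) : ℂ)
      + f (n.1 - 1, n.2) / ((Real.sqrt (m n) * Real.sqrt (m (n.1 - 1, n.2)) : ℝ) : ℂ)
      + f (n.1, n.2 + 1) / ((Real.sqrt (m n) * Real.sqrt (m (n.1, n.2 + 1)) : ℝ) : ℂ)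
      + f (n.1, n.2 - 1) / ((Real.sqrt (m n) * Real.sqrt (m (n.1, n.2 - 1)) : ℝ) : ℂ)
      + f (n.1 + 1, n.2 - 1) / ((Real.sqrt (m n) * Real.sqrt (m (n.1 + 1, n.2 - 1)) : ℝ) : ℂ)
      + f (n.1 - 1, n.2 + 1) / ((Real.sqrt (m n) * Real.sqrt (m (n.1 - 1, n.2 + 1)) : ℝ) : ℂ))


/-! ### Auxiliary lemmas -/

lemma jap_nonneg' (t : ℝ) : 0 ≤ jap t := Real.sqrt_nonneg _

lemma abs_le_jap' (t : ℝ) : |t| ≤ jap t := by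
  rw [← Real.sqrt_sq_eq_abs]
  exact Real.sqrt_le_sqrt (by nlinarith)

lemma half_le_jap' (t : ℝ) : 1/2 ≤ jap t := by
  have : ((1:ℝ)/2) = Real.sqrt ((1/2)^2) := by
    rw [Real.sqrt_sq]; norm_num
  rw [this]
  exact Real.sqrt_le_sqrt (by nlinarith)

lemma jap_add_le' (a c : ℝ) : jap (a + c) ≤ jap a + |c| := by
  have hu : |a| ≤ jap a := abs_le_jap' a
  have hu0 : 0 ≤ jap a := jap_nonneg' a
  have hsq : jap a ^ 2 = 1/2 + a^2 := by
    unfold jap; rw [Real.sq_sqrt]; positivity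
  have key : 1/2 + (a+c)^2 ≤ (jap a + |c|)^2 := by
    nlinarith [le_abs_self (a*c), abs_mul a c, sq_abs c,
      mul_le_mul_of_nonneg_right hu (abs_nonneg c)]
  calc jap (a+c) ≤ Real.sqrt ((jap a + |c|)^2) := Real.sqrt_le_sqrt key
    _ = jap a + |c| := Real.sqrt_sq (by positivity)

lemma one_le_Lam' (n : ℤ × ℤ) : 1 ≤ Lam n := by
  have := half_le_jap' (n.1 : ℝ); have := half_le_jap' (n.2 : ℝ)
  unfold Lam; linarith

lemma Lam_pos' (n : ℤ × ℤ) : 0 < Lam n := lt_of_lt_of_le one_pos (one_le_Lam' n)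

lemma Lam_add_le' (n s : ℤ × ℤ) (h1 : |(s.1:ℝ)| ≤ 1) (h2 : |(s.2:ℝ)| ≤ 1) :
    Lam (n + s) ≤ 3 * Lam n := by
  have a1 : jap ((n.1:ℝ) + (s.1:ℝ)) ≤ jap (n.1:ℝ) + 1 :=
    le_trans (jap_add_le' _ _) (by linarith)
  have a2 : jap ((n.2:ℝ) + (s.2:ℝ)) ≤ jap (n.2:ℝ) + 1 :=
    le_trans (jap_add_le' _ _) (by linarith)
  have h := one_le_Lam' n
  unfold Lam at *
  simp only [Prod.fst_add, Prod.snd_add, Int.cast_add]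
  linarith

/-- The set of the six shifts appearing in `opA`. -/
def Sshifts : Finset (ℤ × ℤ) := {(1,0),(-1,0),(0,1),(0,-1),(1,-1),(-1,1)}

lemma sum_Sshifts (g : ℤ × ℤ → ℝ) (n : ℤ × ℤ) :
    ∑ s ∈ Sshifts, g (n + s) = g (n.1+1, n.2) + g (n.1-1, n.2) + g (n.1, n.2+1)
      + g (n.1, n.2-1) + g (n.1+1, n.2-1) + g (n.1-1, n.2+1) := by
  have : ∀ a b : ℤ, n + (a, b) = (n.1 + a, n.2 + b) := fun a b => rfl
  simp only [Sshifts, Finset.sum_insert, Finset.mem_insert, Finset.mem_singleton,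
    Finset.sum_singleton, this]
  norm_num
  ring

lemma Sshifts_small : ∀ s ∈ Sshifts, |s.1| ≤ 1 ∧ |s.2| ≤ 1 := by decide

lemma opA_bound (f : ℤ × ℤ → ℂ) (n : ℤ × ℤ) :
    ‖opA f n‖ ≤ Lam n * ∑ s ∈ Sshifts, ‖f (n + s)‖ := by
  have hr1 := abs_le.mp (abs_le_jap' (n.1 : ℝ))
  have hr2 := abs_le.mp (abs_le_jap' (n.2 : ℝ))
  have hh1 := half_le_jap' (n.1 : ℝ)
  have hh2 := half_le_jap' (n.2 : ℝ)
  have hL : Lam n = jap (n.1:ℝ) + jap (n.2:ℝ) := rfl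
  set a := ((n.1 : ℂ) + 1/2) * f (n.1 + 1, n.2) with ha
  set b := ((n.1 : ℂ) - 1/2) * f (n.1 - 1, n.2) with hb
  set c := ((n.2 : ℂ) + 1/2) * f (n.1, n.2 + 1) with hc
  set d := ((n.2 : ℂ) - 1/2) * f (n.1, n.2 - 1) with hd
  set e := ((n.2 : ℂ) - (n.1 : ℂ) + 1) * f (n.1 - 1, n.2 + 1) with he
  set g := ((n.1 : ℂ) - (n.2 : ℂ) + 1) * f (n.1 + 1, n.2 - 1) with hg
  have hnorm : ‖opA f n‖ = 1/6 * ‖a - b + c - d + e + g‖ := by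
    show ‖Complex.I / 6 * _‖ = _
    rw [norm_mul, norm_div, Complex.norm_I]
    norm_num
    rfl
  have tri : ‖a - b + c - d + e + g‖ ≤ ‖a‖ + ‖b‖ + ‖c‖ + ‖d‖ + ‖e‖ + ‖g‖ := by
    have h1 := norm_add_le (a - b + c - d + e) g
    have h2 := norm_add_le (a - b + c - d) e
    have h3 := norm_sub_le (a - b + c) d
    have h4 := norm_add_le (a - b) c
    have h5 := norm_sub_le a b
    linarith
  have cb : ∀ x : ℝ, |x| ≤ 2 * Lam n → ∀ u : ℂ, ‖((x : ℝ) : ℂ) * u‖ ≤ 2 * Lam n * ‖u‖ := by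
    intro x hx u
    rw [norm_mul, Complex.norm_real, Real.norm_eq_abs]
    exact mul_le_mul_of_nonneg_right hx (norm_nonneg u)
  have e1 : ‖a‖ ≤ 2 * Lam n * ‖f (n.1 + 1, n.2)‖ := by
    have : a = ((((n.1:ℝ) + 1/2 : ℝ)) : ℂ) * f (n.1 + 1, n.2) := by rw [ha]; push_cast; ring
    rw [this]; exact cb _ (by rw [abs_le]; constructor <;> (rw [hL]; linarith [hr1.1, hr1.2])) _
  have e2 : ‖b‖ ≤ 2 * Lam n * ‖f (n.1 - 1, n.2)‖ := by
    have : b = ((((n.1:ℝ) - 1/2 : ℝ)) : ℂ) * f (n.1 - 1, n.2) := by rw [hb]; push_cast; ring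
    rw [this]; exact cb _ (by rw [abs_le]; constructor <;> (rw [hL]; linarith [hr1.1, hr1.2])) _
  have e3 : ‖c‖ ≤ 2 * Lam n * ‖f (n.1, n.2 + 1)‖ := by
    have : c = ((((n.2:ℝ) + 1/2 : ℝ)) : ℂ) * f (n.1, n.2 + 1) := by rw [hc]; push_cast; ring
    rw [this]; exact cb _ (by rw [abs_le]; constructor <;> (rw [hL]; linarith [hr2.1, hr2.2])) _
  have e4 : ‖d‖ ≤ 2 * Lam n * ‖f (n.1, n.2 - 1)‖ := by
    have : d = ((((n.2:ℝ) - 1/2 : ℝ)) : ℂ) * f (n.1, n.2 - 1) := by rw [hd]; push_cast; ring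
    rw [this]; exact cb _ (by rw [abs_le]; constructor <;> (rw [hL]; linarith [hr2.1, hr2.2])) _
  have e5 : ‖e‖ ≤ 2 * Lam n * ‖f (n.1 - 1, n.2 + 1)‖ := by
    have : e = ((((n.2:ℝ) - (n.1:ℝ) + 1 : ℝ)) : ℂ) * f (n.1 - 1, n.2 + 1) := by
      rw [he]; push_cast; ring
    rw [this]
    exact cb _ (by rw [abs_le]; constructor <;> (rw [hL]; linarith [hr1.1, hr1.2, hr2.1, hr2.2])) _
  have e6 : ‖g‖ ≤ 2 * Lam n * ‖f (n.1 + 1, n.2 - 1)‖ := by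
    have : g = ((((n.1:ℝ) - (n.2:ℝ) + 1 : ℝ)) : ℂ) * f (n.1 + 1, n.2 - 1) := by
      rw [hg]; push_cast; ring
    rw [this]
    exact cb _ (by rw [abs_le]; constructor <;> (rw [hL]; linarith [hr1.1, hr1.2, hr2.1, hr2.2])) _
  rw [sum_Sshifts (fun m => ‖f m‖) n]
  have hLn := Lam_pos' n
  have hns : (0:ℝ) ≤ ‖f (n.1+1, n.2)‖ + ‖f (n.1-1, n.2)‖ + ‖f (n.1, n.2+1)‖
      + ‖f (n.1, n.2-1)‖ + ‖f (n.1+1, n.2-1)‖ + ‖f (n.1-1, n.2+1)‖ := by positivity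
  rw [hnorm]
  nlinarith [tri, e1, e2, e3, e4, e5, e6]

lemma opA_sq_bound (f : ℤ × ℤ → ℂ) (n : ℤ × ℤ) :
    ‖opA (opA f) n‖ ≤ 3 * Lam n ^ 2 * ∑ u ∈ Sshifts ×ˢ Sshifts, ‖f (n + u.1 + u.2)‖ := by
  have h1 := opA_bound (opA f) n
  have h2 : ∑ s ∈ Sshifts, ‖opA f (n + s)‖ ≤
      ∑ s ∈ Sshifts, (3 * Lam n * ∑ t ∈ Sshifts, ‖f (n + s + t)‖) := by
    apply Finset.sum_le_sum
    intro s hs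
    have hs1 : |(s.1:ℝ)| ≤ 1 := by exact_mod_cast (Sshifts_small s hs).1
    have hs2 : |(s.2:ℝ)| ≤ 1 := by exact_mod_cast (Sshifts_small s hs).2
    calc ‖opA f (n + s)‖ ≤ Lam (n + s) * ∑ t ∈ Sshifts, ‖f (n + s + t)‖ := opA_bound f (n + s)
      _ ≤ 3 * Lam n * ∑ t ∈ Sshifts, ‖f (n + s + t)‖ := by
          apply mul_le_mul_of_nonneg_right (Lam_add_le' n s hs1 hs2)
          positivity
  have h3 : ∑ s ∈ Sshifts, (3 * Lam n * ∑ t ∈ Sshifts, ‖f (n + s + t)‖)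
      = 3 * Lam n * ∑ u ∈ Sshifts ×ˢ Sshifts, ‖f (n + u.1 + u.2)‖ := by
    rw [Finset.sum_product, Finset.mul_sum]
  have hLn := Lam_pos' n
  calc ‖opA (opA f) n‖ ≤ Lam n * ∑ s ∈ Sshifts, ‖opA f (n + s)‖ := h1
    _ ≤ Lam n * (3 * Lam n * ∑ u ∈ Sshifts ×ˢ Sshifts, ‖f (n + u.1 + u.2)‖) := by
        apply mul_le_mul_of_nonneg_left _ hLn.le
        rw [← h3]; exact h2
    _ = 3 * Lam n ^ 2 * ∑ u ∈ Sshifts ×ˢ Sshifts, ‖f (n + u.1 + u.2)‖ := by ring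

lemma pointwise_bound (f : ℤ × ℤ → ℂ) (n : ℤ × ℤ) :
    (Lam n ^ 4)⁻¹ * ‖opA (opA f) n‖ ^ 2
      ≤ 324 * ∑ u ∈ Sshifts ×ˢ Sshifts, ‖f (n + u.1 + u.2)‖ ^ 2 := by
  have hLn := Lam_pos' n
  have h1 := opA_sq_bound f n
  have hB : (0:ℝ) ≤ ∑ u ∈ Sshifts ×ˢ Sshifts, ‖f (n + u.1 + u.2)‖ :=
    Finset.sum_nonneg fun _ _ => norm_nonneg _
  have hsq : ‖opA (opA f) n‖ ^ 2 ≤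
      9 * Lam n ^ 4 * (∑ u ∈ Sshifts ×ˢ Sshifts, ‖f (n + u.1 + u.2)‖) ^ 2 := by
    nlinarith [norm_nonneg (opA (opA f) n), sq_nonneg (Lam n)]
  have hCS : (∑ u ∈ Sshifts ×ˢ Sshifts, ‖f (n + u.1 + u.2)‖) ^ 2
      ≤ 36 * ∑ u ∈ Sshifts ×ˢ Sshifts, ‖f (n + u.1 + u.2)‖ ^ 2 := by
    have := Finset.sum_mul_sq_le_sq_mul_sq (Sshifts ×ˢ Sshifts) (fun _ => (1:ℝ))
      (fun u => ‖f (n + u.1 + u.2)‖)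
    simp only [one_mul, one_pow] at this
    have hcard : ∑ _u ∈ Sshifts ×ˢ Sshifts, (1:ℝ) = 36 := by
      rw [Finset.sum_const]; norm_num [Sshifts]
    rw [hcard] at this
    exact this
  have h4 : (0:ℝ) < Lam n ^ 4 := by positivity
  have h5 : 9 * Lam n ^ 4 * (∑ u ∈ Sshifts ×ˢ Sshifts, ‖f (n + u.1 + u.2)‖) ^ 2
      ≤ 9 * Lam n ^ 4 * (36 * ∑ u ∈ Sshifts ×ˢ Sshifts, ‖f (n + u.1 + u.2)‖ ^ 2) :=
    mul_le_mul_of_nonneg_left hCS (by positivity)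
  rw [inv_mul_le_iff₀ h4]
  nlinarith [hsq, h5]


set_option maxHeartbeats 1000000 in
/-- `Λ^{-2}(Q) A²` extends to a bounded operator on `ℓ²(ℤ²,ℂ)`. -/
theorem weight_inv_sq_opA_sq_bounded :
    ∃ C > 0, ∀ f : ℤ × ℤ → ℂ, (Function.support f).Finite →
      ∑' n : ℤ × ℤ, (Lam n ^ 4)⁻¹ * ‖opA (opA f) n‖ ^ 2 ≤ C * ∑' n : ℤ × ℤ, ‖f n‖ ^ 2 := by
  refine ⟨11664, by norm_num, fun f hf => ?_⟩
  set g : ℤ × ℤ → ℝ := fun m => ‖f m‖ ^ 2 with hgdef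
  have hg : Summable g := by
    apply summable_of_ne_finset_zero (s := hf.toFinset)
    intro b hb
    have : f b = 0 := by
      by_contra h
      exact hb (hf.mem_toFinset.mpr h)
    simp [hgdef, this]
  have hshift : ∀ c : ℤ × ℤ, Summable (fun n => g (n + c)) := fun c =>
    (Equiv.addRight c).summable_iff.mpr hg
  have hshift' : ∀ u : (ℤ × ℤ) × (ℤ × ℤ),
      Summable (fun n => g (n + u.1 + u.2)) := by
    intro u
    have := hshift (u.1 + u.2)
    simpa [add_assoc] using this
  have hGsum : Summable (fun n => ∑ u ∈ Sshifts ×ˢ Sshifts, g (n + u.1 + u.2)) :=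
    summable_sum (fun u _ => hshift' u)
  have hG : Summable (fun n => 324 * ∑ u ∈ Sshifts ×ˢ Sshifts, g (n + u.1 + u.2)) :=
    hGsum.mul_left 324
  have hLHS : Summable (fun n => (Lam n ^ 4)⁻¹ * ‖opA (opA f) n‖ ^ 2) := by
    apply Summable.of_nonneg_of_le (fun n => by positivity)
      (fun n => pointwise_bound f n) hG
  calc ∑' n, (Lam n ^ 4)⁻¹ * ‖opA (opA f) n‖ ^ 2
      ≤ ∑' n, 324 * ∑ u ∈ Sshifts ×ˢ Sshifts, g (n + u.1 + u.2) :=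
        Summable.tsum_le_tsum (fun n => pointwise_bound f n) hLHS hG
    _ = 324 * ∑' n, ∑ u ∈ Sshifts ×ˢ Sshifts, g (n + u.1 + u.2) := tsum_mul_left
    _ = 324 * ∑ u ∈ Sshifts ×ˢ Sshifts, ∑' n, g (n + u.1 + u.2) := by
        rw [Summable.tsum_finsetSum (fun u _ => hshift' u)]
    _ = 324 * ∑ u ∈ Sshifts ×ˢ Sshifts, ∑' n, g n := by
        congr 1
        apply Finset.sum_congr rfl
        intro u _
        have := Equiv.tsum_eq (Equiv.addRight (u.1 + u.2)) g
        simp only [Equiv.coe_addRight] at this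
        rw [← this]
        simp [add_assoc]
    _ = 324 * (36 * ∑' n, g n) := by
        rw [Finset.sum_const]
        norm_num [Sshifts]
    _ = 11664 * ∑' n, ‖f n‖ ^ 2 := by rw [hgdef]; ring
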